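/- Let Z be a nonempty set and let ≻ be a binary relation on the set of lotteries over Z satisfying the VNM axioms. Then there exists a utility function u : Z → ℝ such that for all lotteries p and q over Z, p ≻ q if and only if E_p[u] > E_q[u]. -/

import Mathlib

open scoped BigOperators

/-- A lottery over `Z`: a finitely supported nonnegative function summing to one. -/
structure Lottery (Z : Type*) where
  w : Z →₀ ℝ
  nonneg : ∀ z, 0 ≤ w z
  total : w.sum (fun _ x => x) = 1

/-- The mixture `α·p + (1-α)·q` of two lotteries (defined to be `p` if `α ∉ [0,1]`). -/
noncomputable def Lottery.mix {Z : Type*} (α : ℝ) (p q : Lottery Z) : Lottery Z :=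
  if h : 0 ≤ α ∧ α ≤ 1 then
    { w := α • p.w + (1 - α) • q.w
      nonneg := by
        intro z
        have hp := p.nonneg z
        have hq := q.nonneg z
        have h1 : (0:ℝ) ≤ 1 - α := by linarith [h.2]
        rw [Finsupp.add_apply, Finsupp.smul_apply, Finsupp.smul_apply,
          smul_eq_mul, smul_eq_mul]
        nlinarith [h.1]
      total := by
        rw [Finsupp.sum_add_index' (fun _ => rfl) (fun _ _ _ => rfl)]
        rw [Finsupp.sum_smul_index (fun _ => rfl), Finsupp.sum_smul_index (fun _ => rfl)]
        rw [← Finsupp.mul_sum, ← Finsupp.mul_sum, p.total, q.total]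
        ring }
  else p

/-- Expected utility of a lottery `p` with respect to utility `u`. -/
noncomputable def EU {Z : Type*} (u : Z → ℝ) (p : Lottery Z) : ℝ :=
  p.w.sum fun z x => x * u z

/-- The von Neumann–Morgenstern axioms for a strict preference relation on lotteries. -/
def VNM {Z : Type*} (pr : Lottery Z → Lottery Z → Prop) : Prop :=
  -- Asymmetry
  (∀ p q, pr p q → ¬ pr q p) ∧
  -- Negative transitivity
  (∀ p q r, ¬ pr p q → ¬ pr q r → ¬ pr p r) ∧
  -- Independence
  (∀ p q r, pr p q → ∀ α : ℝ, 0 < α → α ≤ 1 →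
      pr (Lottery.mix α p r) (Lottery.mix α q r)) ∧
  -- Continuity
  (∀ p q r, pr p q → pr q r →
      ∃ α β : ℝ, 0 < α ∧ α < 1 ∧ 0 < β ∧ β < 1 ∧
        pr (Lottery.mix α p r) q ∧ pr q (Lottery.mix β p r))

namespace VNMAux
variable {Z : Type*}
theorem lot_ext {p q : Lottery Z} (h : p.w = q.w) : p = q := by
  cases p; cases q; simp_all
theorem mix_w {α : ℝ} (h0 : 0 ≤ α) (h1 : α ≤ 1) (p q : Lottery Z) :
    (Lottery.mix α p q).w = α • p.w + (1 - α) • q.w := by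
  rw [Lottery.mix, dif_pos ⟨h0, h1⟩]
theorem mix_apply {α : ℝ} (h0 : 0 ≤ α) (h1 : α ≤ 1) (p q : Lottery Z) (z : Z) :
    (Lottery.mix α p q).w z = α * p.w z + (1 - α) * q.w z := by
  rw [mix_w h0 h1]; simp
theorem mix_one (p q : Lottery Z) : Lottery.mix 1 p q = p := by
  apply lot_ext; ext z; rw [mix_apply zero_le_one le_rfl]; ring
theorem mix_zero (p q : Lottery Z) : Lottery.mix 0 p q = q := by
  apply lot_ext; ext z; rw [mix_apply le_rfl zero_le_one]; ring
theorem mix_self {α : ℝ} (h0 : 0 ≤ α) (h1 : α ≤ 1) (p : Lottery Z) :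
    Lottery.mix α p p = p := by
  apply lot_ext; ext z; rw [mix_apply h0 h1]; ring
theorem mix_comm {α : ℝ} (h0 : 0 ≤ α) (h1 : α ≤ 1) (p q : Lottery Z) :
    Lottery.mix α p q = Lottery.mix (1 - α) q p := by
  apply lot_ext; ext z
  rw [mix_apply h0 h1, mix_apply (by linarith) (by linarith)]; ring
theorem mix_mix {a s t : ℝ} (ha0 : 0 ≤ a) (ha1 : a ≤ 1) (hs0 : 0 ≤ s) (hs1 : s ≤ 1)
    (ht0 : 0 ≤ t) (ht1 : t ≤ 1) (B W : Lottery Z) :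
    Lottery.mix a (Lottery.mix s B W) (Lottery.mix t B W)
      = Lottery.mix (a*s + (1-a)*t) B W := by
  apply lot_ext; ext z
  rw [mix_apply ha0 ha1, mix_apply hs0 hs1, mix_apply ht0 ht1,
    mix_apply (by nlinarith) (by nlinarith)]
  ring
theorem mix_swap {a : ℝ} (ha0 : 0 < a) (ha1 : a < 1) (p q r : Lottery Z) :
    Lottery.mix (1/(1+a)) (Lottery.mix a p r) q
      = Lottery.mix (1/(1+a)) (Lottery.mix a q r) p := by
  have h1a : (0:ℝ) < 1 + a := by linarith
  have hl0 : (0:ℝ) ≤ 1/(1+a) := by positivity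
  have hl1 : 1/(1+a) ≤ (1:ℝ) := by rw [div_le_one h1a]; linarith
  apply lot_ext; ext z
  rw [mix_apply hl0 hl1, mix_apply hl0 hl1, mix_apply ha0.le ha1.le,
    mix_apply ha0.le ha1.le]
  field_simp
  ring
theorem EU_mix {α : ℝ} (h0 : 0 ≤ α) (h1 : α ≤ 1) (u : Z → ℝ) (p q : Lottery Z) :
    EU u (Lottery.mix α p q) = α * EU u p + (1-α) * EU u q := by
  unfold EU
  rw [mix_w h0 h1]
  rw [Finsupp.sum_add_index' (by intro z; simp) (by intro z x y; ring)]
  rw [Finsupp.sum_smul_index (by intro z; simp), Finsupp.sum_smul_index (by intro z; simp)]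
  rw [Finsupp.mul_sum, Finsupp.mul_sum]
  congr 1 <;> (apply Finsupp.sum_congr; intro z _; ring)

/-! ### Order basics -/

/-- weak preference: `p ≽ q` -/
def ge (pr : Lottery Z → Lottery Z → Prop) (p q : Lottery Z) : Prop := ¬ pr q p
/-- indifference -/
def eqv (pr : Lottery Z → Lottery Z → Prop) (p q : Lottery Z) : Prop := ¬ pr p q ∧ ¬ pr q p

variable {pr : Lottery Z → Lottery Z → Prop}

theorem asym (hv : VNM pr) {p q} (h : pr p q) : ¬ pr q p := hv.1 p q h
theorem ge_refl (hv : VNM pr) (p) : ge pr p p := fun h => hv.1 p p h h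
theorem eqv_refl (hv : VNM pr) (p) : eqv pr p p := ⟨ge_refl hv p, ge_refl hv p⟩
theorem eqv_symm {p q} (h : eqv pr p q) : eqv pr q p := ⟨h.2, h.1⟩
theorem ge_total (hv : VNM pr) (p q) : ge pr p q ∨ ge pr q p := by
  by_contra h
  push_neg at h
  simp only [ge, not_not] at h
  exact hv.1 p q h.2 h.1
theorem pr_of_not_ge {p q} (h : ¬ ge pr p q) : pr q p := not_not.mp h
theorem ge_trans (hv : VNM pr) {p q r} (h1 : ge pr p q) (h2 : ge pr q r) : ge pr p r :=
  hv.2.1 r q p h2 h1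
theorem pr_trans (hv : VNM pr) {p q r} (h1 : pr p q) (h2 : pr q r) : pr p r := by
  by_contra h
  exact hv.2.1 p r q h (asym hv h2) h1
theorem pr_ge_trans (hv : VNM pr) {p q r} (h1 : pr p q) (h2 : ge pr q r) : pr p r := by
  by_contra h
  exact hv.2.1 p r q h h2 h1
theorem ge_pr_trans (hv : VNM pr) {p q r} (h1 : ge pr p q) (h2 : pr q r) : pr p r := by
  by_contra h
  exact hv.2.1 q p r h1 h h2
theorem pr_eqv_trans (hv : VNM pr) {p q r} (h1 : pr p q) (h2 : eqv pr q r) : pr p r :=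
  pr_ge_trans hv h1 h2.2
theorem eqv_pr_trans (hv : VNM pr) {p q r} (h1 : eqv pr p q) (h2 : pr q r) : pr p r :=
  ge_pr_trans hv h1.2 h2
theorem eqv_trans (hv : VNM pr) {p q r} (h1 : eqv pr p q) (h2 : eqv pr q r) : eqv pr p r :=
  ⟨fun h => h2.1 (eqv_pr_trans hv (eqv_symm h1) h), fun h => h2.2 (pr_eqv_trans hv h h1)⟩
theorem ge_of_pr (hv : VNM pr) {p q} (h : pr p q) : ge pr p q := asym hv h
theorem ge_of_eqv {p q} (h : eqv pr p q) : ge pr p q := h.2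

theorem indep (hv : VNM pr) {p q} (r) (h : pr p q) {α : ℝ} (h0 : 0 < α) (h1 : α ≤ 1) :
    pr (Lottery.mix α p r) (Lottery.mix α q r) := hv.2.2.1 p q r h α h0 h1

/-- `X ≻ q → X ≻ mix c X q` for `c ∈ [0,1)` : mixing toward a worse lottery hurts. -/
theorem pr_mix_right (hv : VNM pr) {X q : Lottery Z} (h : pr X q) {c : ℝ}
    (h0 : 0 ≤ c) (h1 : c < 1) : pr X (Lottery.mix c X q) := by
  have := indep hv X h (by linarith : (0:ℝ) < 1 - c) (by linarith)
  rw [mix_self (by linarith) (by linarith)] at this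
  rwa [mix_comm h0 h1.le]
/-- `X ≻ q → mix c X q ≻ q` for `c ∈ (0,1]`. -/
theorem mix_pr_left (hv : VNM pr) {X q : Lottery Z} (h : pr X q) {c : ℝ}
    (h0 : 0 < c) (h1 : c ≤ 1) : pr (Lottery.mix c X q) q := by
  have := indep hv q h h0 h1
  rwa [mix_self h0.le h1] at this

/-- Monotonicity in the mixture weight (lemma (a)). -/
theorem mix_mono (hv : VNM pr) {p q : Lottery Z} (h : pr p q) {a b : ℝ}
    (ha : 0 ≤ a) (hab : a < b) (hb : b ≤ 1) :
    pr (Lottery.mix b p q) (Lottery.mix a p q) := by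
  have hb0 : 0 < b := lt_of_le_of_lt ha hab
  have hm : pr (Lottery.mix b p q) q := mix_pr_left hv h hb0 hb
  rcases eq_or_lt_of_le ha with rfl | ha0
  · rwa [mix_zero]
  · have hd0 : 0 ≤ a/b := by positivity
    have hd1 : a/b < 1 := by rw [div_lt_one hb0]; linarith
    have key : Lottery.mix (a/b) (Lottery.mix b p q) (Lottery.mix 0 p q)
        = Lottery.mix a p q := by
      rw [mix_mix hd0 hd1.le hb0.le hb le_rfl zero_le_one]
      congr 1
      field_simp
      ring
    rw [mix_zero] at key
    rw [← key]
    exact pr_mix_right hv hm hd0 hd1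
end VNMAux

namespace Part2
variable {Z : Type*} {pr : Lottery Z → Lottery Z → Prop}
open VNMAux

theorem mix_absorb {l a : ℝ} (hl0 : 0 ≤ l) (hl1 : l ≤ 1) (ha0 : 0 ≤ a) (ha1 : a ≤ 1)
    (p r : Lottery Z) :
    Lottery.mix l (Lottery.mix a p r) r = Lottery.mix (l*a) p r := by
  apply lot_ext; ext z
  rw [mix_apply hl0 hl1, mix_apply ha0 ha1, mix_apply (by positivity) (by nlinarith)]
  ring

theorem mix_toward {b x : ℝ} (hb0 : 0 ≤ b) (hb1 : b ≤ 1) (hx0 : 0 ≤ x) (hx1 : x ≤ 1)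
    (q r : Lottery Z) :
    Lottery.mix b q (Lottery.mix x q r) = Lottery.mix (b + (1-b)*x) q r := by
  apply lot_ext; ext z
  rw [mix_apply hb0 hb1, mix_apply hx0 hx1, mix_apply (by nlinarith) (by nlinarith)]
  ring

theorem mix_push {a : ℝ} (ha0 : 0 < a) (ha1 : a < 1) (p r : Lottery Z) :
    Lottery.mix (1/(1+a)) (Lottery.mix a p r) p = Lottery.mix (2*a/(1+a)) p r := by
  have h1a : (0:ℝ) < 1 + a := by linarith
  have hl0 : (0:ℝ) ≤ 1/(1+a) := by positivity
  have hl1 : 1/(1+a) ≤ (1:ℝ) := by rw [div_le_one h1a]; linarith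
  have hp0 : (0:ℝ) ≤ 2*a/(1+a) := by positivity
  have hp1 : 2*a/(1+a) ≤ (1:ℝ) := by rw [div_le_one h1a]; linarith
  apply lot_ext; ext z
  rw [mix_apply hl0 hl1, mix_apply ha0.le ha1.le, mix_apply hp0 hp1]
  field_simp
  ring

theorem VNM.flip (hv : VNM pr) : VNM (fun p q => pr q p) := by
  refine ⟨fun p q h => hv.1 q p h, fun p q r h1 h2 => hv.2.1 r q p h2 h1,
    fun p q r h α h0 h1 => hv.2.2.1 q p r h α h0 h1, ?_⟩
  intro p q r h1 h2
  obtain ⟨α, β, hα0, hα1, hβ0, hβ1, hc1, hc2⟩ := hv.2.2.2 r q p h2 h1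
  refine ⟨1-β, 1-α, by linarith, by linarith, by linarith, by linarith, ?_, ?_⟩
  · simp only
    rwa [mix_comm (by linarith) (by linarith)] at hc2
  · simp only
    rwa [mix_comm (by linarith) (by linarith)] at hc1

/-- Mixing two indifferent lotteries half-half is indifferent to each. -/
theorem eqv_mix_half (hv : VNM pr) {p q : Lottery Z} (h : eqv pr p q) :
    eqv pr (Lottery.mix (1/2) p q) p := by
  set m := Lottery.mix (1/2) p q with hm_def
  have h20 : (0:ℝ) ≤ 1/2 := by norm_num
  have h21 : (1/2:ℝ) ≤ 1 := by norm_num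
  have h2p : (0:ℝ) < 1/2 := by norm_num
  have hqp : Lottery.mix (1/2) q p = m := by
    rw [hm_def, mix_comm h20 h21 p q]; norm_num
  constructor
  · -- ¬ pr m p
    intro hm
    have hmq : pr m q := pr_eqv_trans hv hm h
    have hy : pr (Lottery.mix (1/2) m q) m := by
      have := indep hv q hm h2p h21
      rwa [← hm_def] at this
    have hx : pr (Lottery.mix (1/2) m p) m := by
      have := indep hv p hmq h2p h21
      rwa [hqp] at this
    set x := Lottery.mix (1/2) m p
    set y := Lottery.mix (1/2) m q
    have hxy : Lottery.mix (1/2) x y = m := by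
      apply lot_ext; ext z
      simp only [hm_def, x, y, mix_apply h20 h21]
      ring
    have h1 : pr m (Lottery.mix (1/2) m y) := by
      have := indep hv y hx h2p h21
      rwa [hxy] at this
    have h2 : pr (Lottery.mix (1/2) y m) m := by
      have := indep hv m hy h2p h21
      rwa [mix_self h20 h21] at this
    rw [mix_comm h20 h21 y m] at h2
    norm_num at h2
    exact asym hv h1 h2
  · -- ¬ pr p m
    intro hp
    have hq : pr q m := eqv_pr_trans hv (eqv_symm h) hp
    have hx : pr m (Lottery.mix (1/2) m q) := by
      have := indep hv q hp h2p h21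
      rwa [← hm_def] at this
    have hy : pr m (Lottery.mix (1/2) m p) := by
      have := indep hv p hq h2p h21
      rwa [hqp] at this
    set x := Lottery.mix (1/2) m q
    set y := Lottery.mix (1/2) m p
    have hxy : Lottery.mix (1/2) x y = m := by
      apply lot_ext; ext z
      simp only [hm_def, x, y, mix_apply h20 h21]
      ring
    have h1 : pr (Lottery.mix (1/2) m y) m := by
      have := indep hv y hx h2p h21
      rwa [hxy] at this
    have h2 : pr m (Lottery.mix (1/2) y m) := by
      have := indep hv m hy h2p h21
      rwa [mix_self h20 h21] at this
    rw [mix_comm h20 h21 y m] at h2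
    norm_num at h2
    exact asym hv h1 h2

end Part2

namespace Part3
variable {Z : Type*} {pr : Lottery Z → Lottery Z → Prop}
open VNMAux Part2

theorem viol_down (hv : VNM pr) {p q r : Lottery Z} {a b : ℝ} (ha1 : a ≤ 1)
    (hb0 : 0 < b) (hba : b ≤ a)
    (h : pr (Lottery.mix a p r) (Lottery.mix a q r)) :
    pr (Lottery.mix b p r) (Lottery.mix b q r) := by
  have ha0 : 0 < a := lt_of_lt_of_le hb0 hba
  have hl0 : 0 < b/a := by positivity
  have hl1 : b/a ≤ 1 := by rw [div_le_one ha0]; exact hba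
  have key := indep hv r h hl0 hl1
  have e : b/a*a = b := by field_simp
  rwa [mix_absorb hl0.le hl1 ha0.le ha1, mix_absorb hl0.le hl1 ha0.le ha1, e] at key

theorem viol_up (hv : VNM pr) {p q r : Lottery Z} {a : ℝ} (ha0 : 0 < a) (ha1 : a < 1)
    (h : pr (Lottery.mix a p r) (Lottery.mix a q r)) :
    pr (Lottery.mix (2*a/(1+a)) p r) (Lottery.mix (2*a/(1+a)) q r) := by
  have h1a : (0:ℝ) < 1+a := by linarith
  have hl0 : (0:ℝ) < 1/(1+a) := by positivity
  have hl1 : 1/(1+a) ≤ (1:ℝ) := by rw [div_le_one h1a]; linarith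
  have s1 := indep hv q h hl0 hl1
  have s2 := indep hv p h hl0 hl1
  rw [mix_swap ha0 ha1 p q r] at s1
  have key := pr_trans hv s2 s1
  rwa [mix_push ha0 ha1 p r, mix_push ha0 ha1 q r] at key

theorem viol_all (hv : VNM pr) {p q r : Lottery Z} {a : ℝ} (ha0 : 0 < a) (ha1 : a < 1)
    (h : pr (Lottery.mix a p r) (Lottery.mix a q r)) :
    ∀ b, 0 < b → b < 1 → pr (Lottery.mix b p r) (Lottery.mix b q r) := by
  intro b hb0 hb1
  have hinv : ∀ n : ℕ, (0 < 2^n*a/(1+(2^n-1)*a) ∧ 2^n*a/(1+(2^n-1)*a) < 1) ∧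
      pr (Lottery.mix (2^n*a/(1+(2^n-1)*a)) p r) (Lottery.mix (2^n*a/(1+(2^n-1)*a)) q r) := by
    intro n; induction n with
    | zero =>
      norm_num
      exact ⟨⟨ha0, ha1⟩, h⟩
    | succ n ih =>
      obtain ⟨⟨h0, h1⟩, hp⟩ := ih
      have h2n : (1:ℝ) ≤ 2^n := one_le_pow₀ (by norm_num)
      have hd : (0:ℝ) < 1+(2^n-1)*a := by nlinarith
      have hd2 : (0:ℝ) < 1+(2^(n+1)-1)*a := by
        have : (1:ℝ) ≤ 2^(n+1) := one_le_pow₀ (by norm_num)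
        nlinarith
      have hg0 : (0:ℝ) < 2^n*a/(1+(2^n-1)*a) := h0
      have key := viol_up hv h0 h1 hp
      have h1g : (0:ℝ) < 1 + 2^n*a/(1+(2^n-1)*a) := by positivity
      have e : 2 * (2^n*a/(1+(2^n-1)*a)) / (1 + 2^n*a/(1+(2^n-1)*a))
          = 2^(n+1)*a/(1+(2^(n+1)-1)*a) := by
        rw [div_eq_div_iff h1g.ne' hd2.ne']
        simp only [one_add_div hd.ne', mul_div_assoc', div_mul_eq_mul_div]; rw [div_eq_div_iff hd.ne' hd.ne']
        ring
      rw [e] at key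
      refine ⟨⟨by positivity, ?_⟩, key⟩
      rw [div_lt_one hd2]
      have : (1:ℝ) ≤ 2^(n+1) := one_le_pow₀ (by norm_num)
      nlinarith
  obtain ⟨n, hn⟩ := pow_unbounded_of_one_lt (b*(1-a)/(a*(1-b))) (one_lt_two (α := ℝ))
  obtain ⟨⟨hf0, hf1⟩, hfp⟩ := hinv n
  have h2n : (1:ℝ) ≤ 2^n := one_le_pow₀ (by norm_num)
  have hd : (0:ℝ) < 1+(2^n-1)*a := by nlinarith
  have hbf : b ≤ 2^n*a/(1+(2^n-1)*a) := by
    rw [le_div_iff₀ hd]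
    rw [div_lt_iff₀ (by nlinarith)] at hn
    nlinarith
  exact viol_down hv hf1.le hb0 hbf hfp

theorem cut_contra (hv : VNM pr) {p q r : Lottery Z} (hpq : eqv pr p q) (hpr : pr p r)
    (S : ∀ b, 0 < b → b < 1 → pr (Lottery.mix b p r) (Lottery.mix b q r)) : False := by
  classical
  have hqr : pr q r := eqv_pr_trans hv (eqv_symm hpq) hpr
  set T : ℝ → Set ℝ :=
    fun x => {a : ℝ | (0 < a ∧ a ≤ 1) ∧ pr (Lottery.mix a q r) (Lottery.mix x p r)} with hT
  have q_pr_sx : ∀ x, 0 < x → x < 1 → pr q (Lottery.mix x p r) := by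
    intro x hx0 hx1
    have h1 : pr (Lottery.mix 1 p r) (Lottery.mix x p r) := mix_mono hv hpr hx0.le hx1 le_rfl
    rw [mix_one] at h1
    exact eqv_pr_trans hv (eqv_symm hpq) h1
  have mem1 : ∀ x, 0 < x → x < 1 → (1:ℝ) ∈ T x := by
    intro x hx0 hx1
    refine ⟨⟨one_pos, le_rfl⟩, ?_⟩
    rw [mix_one]; exact q_pr_sx x hx0 hx1
  have bdd : ∀ x, BddBelow (T x) := fun x => ⟨0, fun a ha => (ha.1.1).le⟩
  set cut : ℝ → ℝ := fun x => sInf (T x) with hcut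
  have cut_le_one : ∀ x, 0 < x → x < 1 → cut x ≤ 1 :=
    fun x h0 h1 => csInf_le (bdd x) (mem1 x h0 h1)
  have cut_lb : ∀ x, 0 < x → x < 1 → x < cut x := by
    intro x hx0 hx1
    have hsx_tx : pr (Lottery.mix x p r) (Lottery.mix x q r) := S x hx0 hx1
    have hq_sx : pr q (Lottery.mix x p r) := q_pr_sx x hx0 hx1
    obtain ⟨α, β, hα0, hα1, hβ0, hβ1, _, hc2⟩ :=
      hv.2.2.2 q (Lottery.mix x p r) (Lottery.mix x q r) hq_sx hsx_tx
    rw [mix_toward hβ0.le hβ1.le hx0.le hx1.le] at hc2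
    set c := β + (1-β)*x with hc
    have hcx : x < c := by nlinarith
    have hc1' : c < 1 := by nlinarith
    refine lt_of_lt_of_le hcx (le_csInf ⟨1, mem1 x hx0 hx1⟩ ?_)
    intro a ha
    by_contra hlt
    push_neg at hlt
    have htca : pr (Lottery.mix c q r) (Lottery.mix a q r) :=
      mix_mono hv hqr ha.1.1.le hlt hc1'.le
    exact asym hv (pr_trans hv hc2 htca) ha.2
  have scale : ∀ x, 0 < x → x < 1 → ∀ l, 0 < l → l < 1 → cut (l*x) ≤ l * cut x := by
    intro x hx0 hx1 l hl0 hl1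
    have hsub : ∀ a ∈ T x, l*a ∈ T (l*x) := by
      rintro a ⟨⟨ha0, ha1⟩, hpa⟩
      refine ⟨⟨by positivity, by nlinarith⟩, ?_⟩
      have key := indep hv r hpa hl0 hl1.le
      rwa [mix_absorb hl0.le hl1.le ha0.le ha1, mix_absorb hl0.le hl1.le hx0.le hx1.le] at key
    have h3 : ∀ a ∈ T x, cut (l*x)/l ≤ a := by
      intro a ha
      rw [div_le_iff₀ hl0, mul_comm a l]
      exact csInf_le (bdd _) (hsub a ha)
    have h4 : cut (l*x)/l ≤ cut x := le_csInf ⟨1, mem1 x hx0 hx1⟩ h3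
    calc cut (l*x) = (cut (l*x)/l)*l := by field_simp
    _ ≤ cut x * l := mul_le_mul_of_nonneg_right h4 hl0.le
    _ = l * cut x := mul_comm _ _
  have hhalf := cut_lb (1/2) (by norm_num) (by norm_num)
  set K := 2 * cut (1/2) with hKdef
  have hK : 1 < K := by rw [hKdef]; linarith
  have hK0 : 0 < K := by linarith
  have hKinv : 1/K < 1 := by rw [div_lt_one hK0]; linarith
  set y : ℝ := (1/K + 1)/2 with hy
  have hKinv0 : 0 < 1/K := by positivity
  have hy1 : y < 1 := by rw [hy]; linarith
  have hyhalf : 1/2 < y := by rw [hy]; linarith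
  have hy0 : 0 < y := by linarith
  set l : ℝ := 1/(2*y) with hl
  have hl0 : 0 < l := by positivity
  have hl1 : l < 1 := by rw [hl, div_lt_one (by linarith)]; linarith
  have hly : l * y = 1/2 := by
    rw [hl]; rw [div_mul_eq_mul_div, one_mul, div_eq_div_iff (by positivity) (by norm_num)]
    ring
  have hs := scale y hy0 hy1 l hl0 hl1
  rw [hly] at hs
  have hcy : cut y ≤ 1 := cut_le_one y hy0 hy1
  have e1 : y * cut (1/2) ≤ y * (l * cut y) := mul_le_mul_of_nonneg_left hs hy0.le
  have e2 : y * (l * cut y) = (l*y) * cut y := by ring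
  rw [e2, hly] at e1
  have e3 : y * cut (1/2) ≤ 1/2 := by nlinarith
  have h6 : 1/K < y := by rw [hy]; linarith
  rw [div_lt_iff₀ hK0] at h6
  rw [hKdef] at h6
  nlinarith

theorem key_noviol (hv : VNM pr) {p q r : Lottery Z} (hpq : eqv pr p q) {a : ℝ}
    (ha0 : 0 < a) (ha1 : a < 1)
    (hviol : pr (Lottery.mix a p r) (Lottery.mix a q r)) : False := by
  have S := viol_all hv ha0 ha1 hviol
  by_cases hpr : pr p r
  · exact cut_contra hv hpq hpr S
  · by_cases hrp : pr r p
    · have hv' := VNM.flip hv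
      have hrq : pr r q := pr_eqv_trans hv hrp hpq
      exact cut_contra hv' ⟨hpq.1, hpq.2⟩ hrq (fun b hb0 hb1 => S b hb0 hb1)
    · have hpr_eqv : eqv pr p r := ⟨hpr, hrp⟩
      have hqr_eqv : eqv pr q r := eqv_trans hv (eqv_symm hpq) hpr_eqv
      have h1 := eqv_mix_half hv hpr_eqv
      have h2 := eqv_mix_half hv hqr_eqv
      have h3 : eqv pr (Lottery.mix (1/2) p r) (Lottery.mix (1/2) q r) :=
        eqv_trans hv (eqv_trans hv h1 hpq) (eqv_symm h2)
      exact h3.1 (S (1/2) (by norm_num) (by norm_num))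

/-- Independence for indifference (lemma (c)). -/
theorem eqv_indep (hv : VNM pr) {p q : Lottery Z} (r : Lottery Z) (h : eqv pr p q) {α : ℝ}
    (h0 : 0 ≤ α) (h1 : α ≤ 1) : eqv pr (Lottery.mix α p r) (Lottery.mix α q r) := by
  rcases eq_or_lt_of_le h0 with heq|h0'
  · rw [← heq, mix_zero, mix_zero]; exact eqv_refl hv r
  rcases eq_or_lt_of_le h1 with heq|h1'
  · rw [heq, mix_one, mix_one]; exact h
  exact ⟨fun hc => key_noviol hv h h0' h1' hc, fun hc => key_noviol hv (eqv_symm h) h0' h1' hc⟩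

end Part3

namespace Part4
variable {Z : Type*} {pr : Lottery Z → Lottery Z → Prop}
open VNMAux Part2 Part3

theorem ge_indep (hv : VNM pr) {p q : Lottery Z} (r : Lottery Z) (h : ge pr p q) {α : ℝ}
    (h0 : 0 ≤ α) (h1 : α ≤ 1) : ge pr (Lottery.mix α p r) (Lottery.mix α q r) := by
  by_cases hpq : pr p q
  · rcases eq_or_lt_of_le h0 with heq|h0'
    · rw [← heq, mix_zero, mix_zero]; exact ge_refl hv r
    · exact ge_of_pr hv (indep hv r hpq h0' h1)
  · exact ge_of_eqv (eqv_indep hv r ⟨hpq, h⟩ h0 h1)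

theorem ge_indep' (hv : VNM pr) {p q : Lottery Z} (r : Lottery Z) (h : ge pr p q) {α : ℝ}
    (h0 : 0 ≤ α) (h1 : α ≤ 1) : ge pr (Lottery.mix α r p) (Lottery.mix α r q) := by
  rw [mix_comm h0 h1 r p, mix_comm h0 h1 r q]
  exact ge_indep hv r h (by linarith) (by linarith)

theorem eqv_indep' (hv : VNM pr) {p q : Lottery Z} (r : Lottery Z) (h : eqv pr p q) {α : ℝ}
    (h0 : 0 ≤ α) (h1 : α ≤ 1) : eqv pr (Lottery.mix α r p) (Lottery.mix α r q) := by
  rw [mix_comm h0 h1 r p, mix_comm h0 h1 r q]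
  exact eqv_indep hv r h (by linarith) (by linarith)

theorem ge_mix_of_ge (hv : VNM pr) {B p q : Lottery Z} (h1 : ge pr B p) (h2 : ge pr B q)
    {α : ℝ} (h0 : 0 ≤ α) (hle : α ≤ 1) : ge pr B (Lottery.mix α p q) := by
  have s1 : ge pr (Lottery.mix α B q) (Lottery.mix α p q) := ge_indep hv q h1 h0 hle
  have s2 : ge pr (Lottery.mix α B B) (Lottery.mix α B q) := ge_indep' hv B h2 h0 hle
  rw [mix_self h0 hle] at s2
  exact ge_trans hv s2 s1

theorem mix_ge_of_ge (hv : VNM pr) {W p q : Lottery Z} (h1 : ge pr p W) (h2 : ge pr q W)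
    {α : ℝ} (h0 : 0 ≤ α) (hle : α ≤ 1) : ge pr (Lottery.mix α p q) W := by
  have s1 : ge pr (Lottery.mix α p q) (Lottery.mix α W q) := ge_indep hv q h1 h0 hle
  have s2 : ge pr (Lottery.mix α W q) (Lottery.mix α W W) := ge_indep' hv W h2 h0 hle
  rw [mix_self h0 hle] at s2
  exact ge_trans hv s1 s2

/-- Solvability: between `B ≻ W`, every `x` is indifferent to a unique mixture. -/
theorem solv (hv : VNM pr) {B W x : Lottery Z} (hBW : pr B W) (hBx : ge pr B x)
    (hxW : ge pr x W) :
    ∃ t, (0 ≤ t ∧ t ≤ 1) ∧ eqv pr (Lottery.mix t B W) x := by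
  classical
  set T := {s : ℝ | 0 ≤ s ∧ s ≤ 1 ∧ ge pr x (Lottery.mix s B W)} with hT
  have h0T : (0:ℝ) ∈ T := ⟨le_rfl, zero_le_one, by rw [mix_zero]; exact hxW⟩
  have hbdd : BddAbove T := ⟨1, fun s hs => hs.2.1⟩
  set t := sSup T with ht
  have ht0 : 0 ≤ t := le_csSup hbdd h0T
  have ht1 : t ≤ 1 := csSup_le ⟨0, h0T⟩ (fun s hs => hs.2.1)
  refine ⟨t, ⟨ht0, ht1⟩, ?_, ?_⟩
  · intro hc
    have htpos : 0 < t := by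
      rcases eq_or_lt_of_le ht0 with heq|hpos
      · exfalso; rw [← heq, mix_zero] at hc; exact hxW hc
      · exact hpos
    by_cases hxW' : pr x W
    · obtain ⟨α, _, hα0, hα1, _, _, hc1, _⟩ := hv.2.2.2 _ x W hc hxW'
      rw [mix_absorb hα0.le hα1.le ht0 ht1] at hc1
      have hsup : t ≤ α*t := by
        apply csSup_le ⟨0, h0T⟩
        intro s hs
        by_contra hgt
        push_neg at hgt
        have hm := mix_mono hv hBW (mul_nonneg hα0.le ht0) hgt hs.2.1
        exact hs.2.2 (pr_trans hv hm hc1)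
      nlinarith
    · have hall : ∀ s ∈ T, s ≤ 0 := by
        intro s hs
        by_contra hs0
        push_neg at hs0
        have hm : pr (Lottery.mix s B W) W := by
          have := mix_mono hv hBW le_rfl hs0 hs.2.1
          rwa [mix_zero] at this
        exact hs.2.2 (pr_ge_trans hv hm hxW')
      have : t ≤ 0 := csSup_le ⟨0, h0T⟩ hall
      linarith
  · intro hc
    have ht1' : t < 1 := by
      rcases eq_or_lt_of_le ht1 with heq|hlt
      · exfalso; rw [heq, mix_one] at hc; exact hBx hc
      · exact hlt
    by_cases hBx' : pr B x
    · obtain ⟨_, β, _, _, hβ0, hβ1, _, hc2⟩ := hv.2.2.2 B x (Lottery.mix t B W) hBx' hc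
      rw [mix_toward hβ0.le hβ1.le ht0 ht1] at hc2
      have hs'0 : 0 ≤ β + (1-β)*t := by nlinarith
      have hs'1 : β + (1-β)*t ≤ 1 := by nlinarith
      have hmem : β + (1-β)*t ∈ T := ⟨hs'0, hs'1, ge_of_pr hv hc2⟩
      have := le_csSup hbdd hmem
      nlinarith
    · have hst : t < (t+1)/2 := by linarith
      have hs1 : (t+1)/2 < 1 := by linarith
      have hm : pr B (Lottery.mix ((t+1)/2) B W) := by
        have := mix_mono hv hBW (by linarith : (0:ℝ) ≤ (t+1)/2) hs1 le_rfl
        rwa [mix_one] at this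
      have hxm : pr x (Lottery.mix ((t+1)/2) B W) := ge_pr_trans hv hBx' hm
      have hmem : (t+1)/2 ∈ T := ⟨by linarith, hs1.le, ge_of_pr hv hxm⟩
      have := le_csSup hbdd hmem
      linarith

open Classical in
/-- The calibration weight of `x` between `B` and `W`. -/
noncomputable def calib (pr : Lottery Z → Lottery Z → Prop) (B W x : Lottery Z) : ℝ :=
  if h : ∃ t, ((0 ≤ t ∧ t ≤ 1) ∧ eqv pr (Lottery.mix t B W) x) then Classical.choose h else 0

theorem calib_spec (hv : VNM pr) {B W x : Lottery Z} (hBW : pr B W) (hBx : ge pr B x)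
    (hxW : ge pr x W) :
    (0 ≤ calib pr B W x ∧ calib pr B W x ≤ 1) ∧
      eqv pr (Lottery.mix (calib pr B W x) B W) x := by
  have h := solv hv hBW hBx hxW
  rw [calib, dif_pos h]
  exact Classical.choose_spec h

theorem calib_unique (hv : VNM pr) {B W x : Lottery Z} (hBW : pr B W) (hBx : ge pr B x)
    (hxW : ge pr x W) {c : ℝ} (hc0 : 0 ≤ c) (hc1 : c ≤ 1)
    (hce : eqv pr (Lottery.mix c B W) x) : calib pr B W x = c := by
  obtain ⟨⟨ht0, ht1⟩, hte⟩ := calib_spec hv hBW hBx hxW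
  set t := calib pr B W x
  by_contra hne
  have heqv : eqv pr (Lottery.mix t B W) (Lottery.mix c B W) :=
    eqv_trans hv hte (eqv_symm hce)
  rcases lt_or_gt_of_ne hne with hlt | hgt
  · exact heqv.2 (mix_mono hv hBW ht0 hlt hc1)
  · exact heqv.1 (mix_mono hv hBW hc0 hgt ht1)

theorem calib_order (hv : VNM pr) {B W x y : Lottery Z} (hBW : pr B W) (hBx : ge pr B x)
    (hxW : ge pr x W) (hBy : ge pr B y) (hyW : ge pr y W) :
    (pr x y ↔ calib pr B W x > calib pr B W y) := by
  obtain ⟨⟨hx0, hx1⟩, hxe⟩ := calib_spec hv hBW hBx hxW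
  obtain ⟨⟨hy0, hy1⟩, hye⟩ := calib_spec hv hBW hBy hyW
  constructor
  · intro hxy
    by_contra hle
    push_neg at hle
    rcases eq_or_lt_of_le hle with heq|hlt
    · have : eqv pr x y := eqv_trans hv (eqv_symm hxe) (heq ▸ hye)
      exact this.1 hxy
    · have hm := mix_mono hv hBW hx0 hlt hy1
      have : pr y x := pr_eqv_trans hv (eqv_pr_trans hv (eqv_symm hye) hm) hxe
      exact asym hv hxy this
  · intro hgt
    have hm := mix_mono hv hBW hy0 hgt hx1
    exact pr_eqv_trans hv (eqv_pr_trans hv (eqv_symm hxe) hm) hye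

theorem calib_affine (hv : VNM pr) {B W x y : Lottery Z} (hBW : pr B W) (hBx : ge pr B x)
    (hxW : ge pr x W) (hBy : ge pr B y) (hyW : ge pr y W) {α : ℝ} (h0 : 0 ≤ α) (h1 : α ≤ 1) :
    calib pr B W (Lottery.mix α x y)
      = α * calib pr B W x + (1-α) * calib pr B W y := by
  obtain ⟨⟨hx0, hx1⟩, hxe⟩ := calib_spec hv hBW hBx hxW
  obtain ⟨⟨hy0, hy1⟩, hye⟩ := calib_spec hv hBW hBy hyW
  have hcov1 : ge pr B (Lottery.mix α x y) := ge_mix_of_ge hv hBx hBy h0 h1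
  have hcov2 : ge pr (Lottery.mix α x y) W := mix_ge_of_ge hv hxW hyW h0 h1
  apply calib_unique hv hBW hcov1 hcov2 (by nlinarith) (by nlinarith)
  have e1 : eqv pr (Lottery.mix α (Lottery.mix (calib pr B W x) B W) y)
      (Lottery.mix α x y) := eqv_indep hv y hxe h0 h1
  have e2 : eqv pr (Lottery.mix α (Lottery.mix (calib pr B W x) B W)
        (Lottery.mix (calib pr B W y) B W))
      (Lottery.mix α (Lottery.mix (calib pr B W x) B W) y) :=
    eqv_indep' hv _ hye h0 h1
  have := eqv_trans hv e2 e1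
  rwa [mix_mix h0 h1 hx0 hx1 hy0 hy1] at this

end Part4

namespace Part5
variable {Z : Type*} {pr : Lottery Z → Lottery Z → Prop}
open VNMAux Part2 Part3 Part4

theorem calib_nested (hv : VNM pr) {B W B' W' x : Lottery Z}
    (hBW : pr B W) (hB'W' : pr B' W') (hB'B : ge pr B' B) (hWW' : ge pr W W')
    (hBx : ge pr B x) (hxW : ge pr x W) :
    calib pr B' W' x = calib pr B' W' W
      + calib pr B W x * (calib pr B' W' B - calib pr B' W' W) := by
  have hBW'' : ge pr B W' := ge_trans hv (ge_of_pr hv hBW) hWW'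
  have hB'W'' : ge pr B' W := ge_trans hv hB'B (ge_of_pr hv hBW)
  have hB'x : ge pr B' x := ge_trans hv hB'B hBx
  have hxW'' : ge pr x W' := ge_trans hv hxW hWW'
  obtain ⟨⟨hcx0, hcx1⟩, hcxe⟩ := calib_spec hv hBW hBx hxW
  obtain ⟨⟨hcB0, hcB1⟩, hcBe⟩ := calib_spec hv hB'W' hB'B hBW''
  obtain ⟨⟨hcW0, hcW1⟩, hcWe⟩ := calib_spec hv hB'W' hB'W'' hWW'
  have e1 : eqv pr
      (Lottery.mix (calib pr B W x) (Lottery.mix (calib pr B' W' B) B' W') W)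
      (Lottery.mix (calib pr B W x) B W) := eqv_indep hv W hcBe hcx0 hcx1
  have e2 : eqv pr
      (Lottery.mix (calib pr B W x) (Lottery.mix (calib pr B' W' B) B' W')
        (Lottery.mix (calib pr B' W' W) B' W'))
      (Lottery.mix (calib pr B W x) (Lottery.mix (calib pr B' W' B) B' W') W) :=
    eqv_indep' hv _ hcWe hcx0 hcx1
  have e3 := eqv_trans hv (eqv_trans hv e2 e1) hcxe
  rw [mix_mix hcx0 hcx1 hcB0 hcB1 hcW0 hcW1] at e3
  have hu := calib_unique hv hB'W' hB'x hxW'' (by nlinarith) (by nlinarith) e3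
  rw [hu]; ring

/-- normalized ratio -/
noncomputable def ratio (pr : Lottery Z → Lottery Z → Prop) (B W p0 q0 x : Lottery Z) : ℝ :=
  (calib pr B W x - calib pr B W q0)/(calib pr B W p0 - calib pr B W q0)

theorem ratio_nested (hv : VNM pr) {B W B' W' p0 q0 x : Lottery Z}
    (hBW : pr B W) (hB'W' : pr B' W') (hB'B : ge pr B' B) (hWW' : ge pr W W')
    (hBx : ge pr B x) (hxW : ge pr x W) (hBp0 : ge pr B p0) (hp0W : ge pr p0 W)
    (hBq0 : ge pr B q0) (hq0W : ge pr q0 W) :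
    ratio pr B' W' p0 q0 x = ratio pr B W p0 q0 x := by
  have hBW'' : ge pr B W' := ge_trans hv (ge_of_pr hv hBW) hWW'
  have hB'W'' : ge pr B' W := ge_trans hv hB'B (ge_of_pr hv hBW)
  have hΔ : calib pr B' W' W < calib pr B' W' B :=
    (calib_order hv hB'W' hB'B hBW'' hB'W'' hWW').mp hBW
  rw [ratio, ratio,
    calib_nested hv hBW hB'W' hB'B hWW' hBx hxW,
    calib_nested hv hBW hB'W' hB'B hWW' hBp0 hp0W,
    calib_nested hv hBW hB'W' hB'B hWW' hBq0 hq0W]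
  have key : ∀ w d cx cp cq : ℝ, d ≠ 0 →
      (w + cx*d - (w + cq*d))/(w + cp*d - (w + cq*d)) = (cx - cq)/(cp - cq) := by
    intro w d cx cp cq hd
    rw [show w + cx*d - (w + cq*d) = (cx - cq)*d by ring,
      show w + cp*d - (w + cq*d) = (cp - cq)*d by ring,
      mul_div_mul_right _ _ hd]
  exact key _ _ _ _ _ (by linarith)

open Classical in
noncomputable def maxL (pr : Lottery Z → Lottery Z → Prop) (p q : Lottery Z) : Lottery Z :=
  if ge pr p q then p else q
open Classical in
noncomputable def minL (pr : Lottery Z → Lottery Z → Prop) (p q : Lottery Z) : Lottery Z :=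
  if ge pr q p then p else q

theorem maxL_left (hv : VNM pr) (p q : Lottery Z) : ge pr (maxL pr p q) p := by
  rw [maxL]; split
  · exact ge_refl hv p
  · next h => exact ge_of_pr hv (pr_of_not_ge h)
theorem maxL_right (hv : VNM pr) (p q : Lottery Z) : ge pr (maxL pr p q) q := by
  rw [maxL]; split
  · next h => exact h
  · exact ge_refl hv q
theorem minL_left (hv : VNM pr) (p q : Lottery Z) : ge pr p (minL pr p q) := by
  rw [minL]; split
  · exact ge_refl hv p
  · next h => exact ge_of_pr hv (pr_of_not_ge h)
theorem minL_right (hv : VNM pr) (p q : Lottery Z) : ge pr q (minL pr p q) := by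
  rw [minL]; split
  · next h => exact h
  · exact ge_refl hv q

/-- The global utility functional. -/
noncomputable def U (pr : Lottery Z → Lottery Z → Prop) (p0 q0 x : Lottery Z) : ℝ :=
  ratio pr (maxL pr x p0) (minL pr x q0) p0 q0 x

theorem U_eq_ratio (hv : VNM pr) {p0 q0 : Lottery Z} (h00 : pr p0 q0) {B W x : Lottery Z}
    (hBx : ge pr B x) (hxW : ge pr x W) (hBp0 : ge pr B p0) (hq0W : ge pr q0 W) :
    U pr p0 q0 x = ratio pr B W p0 q0 x := by
  set Bx := maxL pr x p0 with hBxd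
  set Wx := minL pr x q0 with hWxd
  -- canonical base facts
  have c1 : ge pr Bx x := maxL_left hv x p0
  have c2 : ge pr Bx p0 := maxL_right hv x p0
  have c3 : ge pr x Wx := minL_left hv x q0
  have c4 : ge pr q0 Wx := minL_right hv x q0
  have c5 : ge pr p0 Wx := ge_trans hv (ge_of_pr hv h00) c4
  have c6 : ge pr Bx q0 := ge_trans hv c2 (ge_of_pr hv h00)
  have hBxWx : pr Bx Wx := ge_pr_trans hv c2 (pr_ge_trans hv h00 c4)
  -- given base facts
  have d2 : ge pr B q0 := ge_trans hv hBp0 (ge_of_pr hv h00)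
  have d5 : ge pr p0 W := ge_trans hv (ge_of_pr hv h00) hq0W
  have hBW : pr B W := ge_pr_trans hv hBp0 (pr_ge_trans hv h00 hq0W)
  -- common refinement
  set B2 := maxL pr B Bx with hB2
  set W2 := minL pr W Wx with hW2
  have e1 : ge pr B2 B := maxL_left hv B Bx
  have e2 : ge pr B2 Bx := maxL_right hv B Bx
  have e3 : ge pr W W2 := minL_left hv W Wx
  have e4 : ge pr Wx W2 := minL_right hv W Wx
  have hB2W2 : pr B2 W2 :=
    ge_pr_trans hv (ge_trans hv e1 hBp0) (pr_ge_trans hv h00 (ge_trans hv hq0W e3))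
  rw [U, ← hBxd, ← hWxd]
  rw [← ratio_nested hv hBxWx hB2W2 e2 e4 c1 c3 c2 c5 c6 c4]
  rw [← ratio_nested hv hBW hB2W2 e1 e3 hBx hxW hBp0 d5 d2 hq0W]

theorem U_order (hv : VNM pr) {p0 q0 : Lottery Z} (h00 : pr p0 q0) (x y : Lottery Z) :
    pr x y ↔ U pr p0 q0 x > U pr p0 q0 y := by
  set B := maxL pr (maxL pr x y) p0 with hB
  set W := minL pr (minL pr x y) q0 with hW
  have hBx : ge pr B x := ge_trans hv (maxL_left hv _ _) (maxL_left hv x y)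
  have hBy : ge pr B y := ge_trans hv (maxL_left hv _ _) (maxL_right hv x y)
  have hBp0 : ge pr B p0 := maxL_right hv _ _
  have hxW : ge pr x W := ge_trans hv (minL_left hv x y) (minL_left hv _ _)
  have hyW : ge pr y W := ge_trans hv (minL_right hv x y) (minL_left hv _ _)
  have hq0W : ge pr q0 W := minL_right hv _ _
  have hBW : pr B W := ge_pr_trans hv hBp0 (pr_ge_trans hv h00 hq0W)
  have hBq0 : ge pr B q0 := ge_trans hv hBp0 (ge_of_pr hv h00)
  have hp0W : ge pr p0 W := ge_trans hv (ge_of_pr hv h00) hq0W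
  rw [U_eq_ratio hv h00 hBx hxW hBp0 hq0W, U_eq_ratio hv h00 hBy hyW hBp0 hq0W]
  have hD : 0 < calib pr B W p0 - calib pr B W q0 := by
    have := (calib_order hv hBW hBp0 hp0W hBq0 hq0W).mp h00
    linarith
  rw [ratio, ratio, gt_iff_lt, div_lt_div_iff_of_pos_right hD]
  rw [calib_order hv hBW hBx hxW hBy hyW]
  constructor <;> intro h <;> [linarith; linarith]

theorem U_affine (hv : VNM pr) {p0 q0 : Lottery Z} (h00 : pr p0 q0) (x y : Lottery Z)
    {α : ℝ} (h0 : 0 ≤ α) (h1 : α ≤ 1) :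
    U pr p0 q0 (Lottery.mix α x y) = α * U pr p0 q0 x + (1-α) * U pr p0 q0 y := by
  set B := maxL pr (maxL pr x y) p0 with hB
  set W := minL pr (minL pr x y) q0 with hW
  have hBx : ge pr B x := ge_trans hv (maxL_left hv _ _) (maxL_left hv x y)
  have hBy : ge pr B y := ge_trans hv (maxL_left hv _ _) (maxL_right hv x y)
  have hBp0 : ge pr B p0 := maxL_right hv _ _
  have hxW : ge pr x W := ge_trans hv (minL_left hv x y) (minL_left hv _ _)
  have hyW : ge pr y W := ge_trans hv (minL_right hv x y) (minL_left hv _ _)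
  have hq0W : ge pr q0 W := minL_right hv _ _
  have hBW : pr B W := ge_pr_trans hv hBp0 (pr_ge_trans hv h00 hq0W)
  have hBq0 : ge pr B q0 := ge_trans hv hBp0 (ge_of_pr hv h00)
  have hp0W : ge pr p0 W := ge_trans hv (ge_of_pr hv h00) hq0W
  have hBm : ge pr B (Lottery.mix α x y) := ge_mix_of_ge hv hBx hBy h0 h1
  have hmW : ge pr (Lottery.mix α x y) W := mix_ge_of_ge hv hxW hyW h0 h1
  rw [U_eq_ratio hv h00 hBx hxW hBp0 hq0W, U_eq_ratio hv h00 hBy hyW hBp0 hq0W,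
    U_eq_ratio hv h00 hBm hmW hBp0 hq0W]
  have hD : 0 < calib pr B W p0 - calib pr B W q0 := by
    have := (calib_order hv hBW hBp0 hp0W hBq0 hq0W).mp h00
    linarith
  rw [ratio, ratio, ratio, calib_affine hv hBW hBx hxW hBy hyW h0 h1]
  field_simp
  ring

end Part5

namespace Part6
variable {Z : Type*} {pr : Lottery Z → Lottery Z → Prop}
open VNMAux Part2 Part3 Part4 Part5

noncomputable def pure (z : Z) : Lottery Z where
  w := Finsupp.single z 1
  nonneg := by
    intro z'
    classical
    rw [Finsupp.single_apply]
    split <;> norm_num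
  total := by rw [Finsupp.sum_single_index (by rfl)]

theorem EU_pure (u : Z → ℝ) (z : Z) : EU u (pure z) = u z := by
  unfold EU pure
  rw [Finsupp.sum_single_index (by simp)]
  simp

theorem support_card_pos (p : Lottery Z) : 0 < p.w.support.card := by
  by_contra hc
  push_neg at hc
  have hemp : p.w.support = ∅ := Finset.card_eq_zero.mp (Nat.le_zero.mp hc)
  have ht := p.total
  rw [Finsupp.sum, hemp, Finset.sum_empty] at ht
  norm_num at ht

theorem eu_eq_u (hv : VNM pr) {p0 q0 : Lottery Z} (h00 : pr p0 q0) :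
    ∀ (n : ℕ) (p : Lottery Z), p.w.support.card = n →
      EU (fun z => U pr p0 q0 (pure z)) p = U pr p0 q0 p := by
  intro n
  induction n using Nat.strong_induction_on with
  | _ n ih =>
    intro p hcard
    classical
    have hpos : 0 < n := hcard ▸ support_card_pos p
    rcases eq_or_lt_of_le (Nat.one_le_iff_ne_zero.mpr hpos.ne') with h1 | h2
    · -- singleton support
      obtain ⟨z, hz⟩ := Finset.card_eq_one.mp (hcard.trans h1.symm)
      have hw1 : p.w z = 1 := by
        have ht := p.total
        rw [Finsupp.sum, hz, Finset.sum_singleton] at ht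
        exact ht
      have hp : p = pure z := by
        apply lot_ext; ext z'
        by_cases h' : z' = z
        · subst h'; rw [hw1]; simp [pure]
        · have : z' ∉ p.w.support := by rw [hz]; simp [h']
          rw [Finsupp.notMem_support_iff.mp this]
          simp [pure, Finsupp.single_apply, Ne.symm h']
      rw [hp, EU_pure]
    · -- at least two atoms
      obtain ⟨z, hz⟩ := Finset.card_pos.mp (hcard ▸ hpos)
      set α := p.w z with hα
      have hα0 : 0 < α := lt_of_le_of_ne (p.nonneg z)
        (Ne.symm (Finsupp.mem_support_iff.mp hz))
      have ht : ∑ a ∈ p.w.support, p.w a = 1 := p.total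
      have hsum : α + ∑ x ∈ p.w.support.erase z, p.w x = 1 := by
        rw [Finset.add_sum_erase _ _ hz]; exact ht
      obtain ⟨z2, hz2, hz2ne⟩ := Finset.exists_mem_ne (hcard ▸ h2) z
      have hz2e : z2 ∈ p.w.support.erase z := Finset.mem_erase.mpr ⟨hz2ne, hz2⟩
      have hz2pos : 0 < p.w z2 := lt_of_le_of_ne (p.nonneg z2)
        (Ne.symm (Finsupp.mem_support_iff.mp hz2))
      have herasesum : p.w z2 ≤ ∑ x ∈ p.w.support.erase z, p.w x :=
        Finset.single_le_sum (fun i _ => p.nonneg i) hz2e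
      have hα1 : α < 1 := by linarith
      have h1α : (0:ℝ) < 1 - α := by linarith
      -- the conditional lottery
      have hqnn : ∀ z', 0 ≤ ((1-α)⁻¹ • p.w.erase z) z' := by
        intro z'
        rw [Finsupp.smul_apply, smul_eq_mul]
        apply mul_nonneg (inv_nonneg.mpr h1α.le)
        rw [Finsupp.erase_apply]
        split
        · exact le_rfl
        · exact p.nonneg z'
      have heratot : (p.w.erase z).sum (fun _ x => x) = 1 - α := by
        rw [Finsupp.sum]
        rw [Finsupp.support_erase]
        rw [Finset.sum_congr rfl (fun x hx => by
          rw [Finsupp.erase_apply, if_neg (Finset.mem_erase.mp hx).1])]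
        linarith
      set q : Lottery Z := ⟨(1-α)⁻¹ • p.w.erase z, hqnn, by
        rw [Finsupp.sum_smul_index (fun _ => rfl), ← Finsupp.mul_sum, heratot]
        field_simp⟩ with hqdef
      have hpq : p = Lottery.mix α (pure z) q := by
        apply lot_ext; ext z'
        rw [mix_apply hα0.le hα1.le]
        by_cases h' : z' = z
        · subst h'
          simp [hqdef, pure, Finsupp.single_apply, Finsupp.erase_apply, hα]
        · simp only [hqdef, pure, Finsupp.smul_apply, Finsupp.erase_apply, if_neg h',
            Finsupp.single_apply, if_neg (Ne.symm h'), smul_eq_mul]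
          field_simp
          ring
      have hqsupp : q.w.support = p.w.support.erase z := by
        rw [hqdef]
        rw [Finsupp.support_smul_eq (inv_ne_zero h1α.ne')]
        exact Finsupp.support_erase
      have hqcard : q.w.support.card = n - 1 := by
        rw [hqsupp, Finset.card_erase_of_mem hz, hcard]
      have ihq := ih (n-1) (by omega) q hqcard
      rw [hpq, EU_mix hα0.le hα1.le, EU_pure, ihq,
        U_affine hv h00 (pure z) q hα0.le hα1.le]

theorem main_rep (hv : VNM pr) :
    ∃ u : Z → ℝ, ∀ p q : Lottery Z, pr p q ↔ EU u p > EU u q := by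
  classical
  by_cases hex : ∃ P Q : Lottery Z, pr P Q
  · obtain ⟨p0, q0, h00⟩ := hex
    refine ⟨fun z => U pr p0 q0 (pure z), fun p q => ?_⟩
    rw [eu_eq_u hv h00 _ p rfl, eu_eq_u hv h00 _ q rfl]
    exact U_order hv h00 p q
  · push_neg at hex
    refine ⟨fun _ => 0, fun p q => ?_⟩
    have hz : ∀ s : Lottery Z, EU (fun _ => (0:ℝ)) s = 0 := by
      intro s
      unfold EU
      simp
    rw [hz p, hz q]
    simp only [gt_iff_lt, lt_irrefl]
    exact ⟨fun h => absurd h (hex p q), False.elim⟩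

end Part6


/-- **Expected utility representation.** Any relation on lotteries satisfying the VNM
axioms is represented by the expected value of some utility function. -/
theorem vnm_expected_utility_representation {Z : Type*} [Nonempty Z]
    (pr : Lottery Z → Lottery Z → Prop) (h : VNM pr) :
    ∃ u : Z → ℝ, ∀ p q : Lottery Z, pr p q ↔ EU u p > EU u q := by
  exact Part6.main_rep h
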